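/- In the random k-ary hypergraph (the Fraïssé limit of finite k-uniform hypergraphs), the theory has unbounded (k−1)-splitting: for every ordinal α there is a parameter set B and a (k−1)-partitioned type p = tp(a_0; ...; a_{k-2}/B) such that for every subset C ⊆ B of cardinality < |α|, p (k−1)-splits over C. Concretely, taking distinct vertices a_0,...,a_{k-2} and sequences (b_i)_{i<α}, (b'_i)_{i<α} such that the only hyperedges are {a_0,...,a_{k-2},b_i}, the type tp(a_0;...;a_{k-2}/{b_i, b'_i : i<α}) (k−1)-splits over {b_i, b'_i : i<β} for every β < α. -/

import Mathlib

open FirstOrder Cardinal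

universe u

/-- The language of `k`-uniform hypergraphs: a single `k`-ary relation. -/
def hyperLang (k : ℕ) : FirstOrder.Language :=
  ⟨fun _ => Empty, fun n => PLift (n = k)⟩

/-- The `hyperLang k`-structure on a type `M` determined by a set `E` of
finsets of `M` (the hyperedges): the `k`-ary relation holds of a tuple iff the
tuple is injective and its image is a hyperedge. -/
noncomputable def hyperStructure (k : ℕ) {M : Type*} (E : Set (Finset M)) :
    (hyperLang k).Structure M where
  funMap := fun f _ => f.elim
  RelMap := fun {_} _ v =>
    haveI := Classical.decEq M
    Function.Injective v ∧ (Finset.univ.image v ∈ E)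

/-- Two `γ`-tuples have the same complete first-order type over the parameter
set `B`: they satisfy the same formulas with parameters from `B`. -/
def SameTypeOver (L : FirstOrder.Language) {M : Type*} [L.Structure M] {γ : Type*}
    (B : Set M) (a a' : γ → M) : Prop :=
  ∀ (n : ℕ) (b : Fin n → M), (∀ i, b i ∈ B) →
    ∀ φ : L.Formula (γ ⊕ Fin n), φ.Realize (Sum.elim a b) ↔ φ.Realize (Sum.elim a' b)

/-- The `k`-partitioned type `tp(a_0; …; a_{k-1} / B)` `k`-splits over `C ⊆ B`. -/
def KSplits (L : FirstOrder.Language) {M : Type*} [L.Structure M] (k : ℕ)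
    (a : Fin k → M) (B C : Set M) : Prop :=
  ∃ (n : ℕ) (φ : L.Formula (Fin k ⊕ Fin n)) (b b' : Fin n → M),
    (∀ i, b i ∈ B) ∧ (∀ i, b' i ∈ B) ∧
    (∀ i : Fin k, SameTypeOver L (C ∪ (a '' {j | j ≠ i})) b b') ∧
    φ.Realize (Sum.elim a b) ∧ ¬ φ.Realize (Sum.elim a b')

/-! ### Auxiliary development -/

noncomputable local instance (priority := 10) instDecEqLocal {α : Type*} : DecidableEq α :=
  Classical.decEq _

noncomputable section Aux

/-- Vertices of the free extension of a hypergraph on `β`. -/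
inductive VV (β : Type u) : Type u
  | base : β → VV β
  | ext : List (VV β) → VV β

namespace VV
variable {β : Type u}

instance : DecidableEq (VV β) := Classical.decEq _

def rank : VV β → ℕ
  | .base _ => 0
  | .ext L => (L.attach.map fun x => rank x.1).foldr max 0 + 1
decreasing_by
  have := List.sizeOf_lt_of_mem x.2
  simp only [ext.sizeOf_spec]
  omega

def lift (σ : β → β) : VV β → VV β
  | .base x => .base (σ x)
  | .ext L => .ext (L.attach.map fun x => lift σ x.1)
decreasing_by
  have := List.sizeOf_lt_of_mem x.2
  simp only [ext.sizeOf_spec]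
  omega

theorem rank_ext (L : List (VV β)) :
    rank (ext L) = (L.map rank).foldr max 0 + 1 := by
  rw [rank, List.attach_map_val]

theorem lift_ext (σ : β → β) (L : List (VV β)) :
    lift σ (ext L) = ext (L.map (lift σ)) := by
  rw [lift, List.attach_map_val]

theorem lift_base (σ : β → β) (x : β) : lift σ (base x) = base (σ x) := by rw [lift]

theorem ind {motive : VV β → Prop} (hb : ∀ x, motive (base x))
    (he : ∀ L, (∀ x ∈ L, motive x) → motive (ext L)) : ∀ v, motive v
  | .base x => hb x
  | .ext L => he L (fun x hx => ind hb he x)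
decreasing_by
  have := List.sizeOf_lt_of_mem hx
  simp only [ext.sizeOf_spec]
  omega

theorem le_foldr_max {f : VV β → ℕ} {x : VV β} {L : List (VV β)} (h : x ∈ L) :
    f x ≤ (L.map f).foldr max 0 := by
  induction L with
  | nil => simp at h
  | cons y t ih =>
    rcases List.mem_cons.1 h with rfl | h
    · simp [le_max_iff]
    · simp only [List.map_cons, List.foldr_cons, le_max_iff]
      exact Or.inr (ih h)

theorem rank_lt_of_mem {x : VV β} {L : List (VV β)} (h : x ∈ L) :
    rank x < rank (ext L) := by
  rw [rank_ext]
  exact Nat.lt_succ_of_le (le_foldr_max h)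

theorem rank_lift (σ : β → β) : ∀ v : VV β, rank (lift σ v) = rank v := by
  intro v
  induction v using ind with
  | hb x => rw [lift, rank, rank]
  | he L ih =>
    rw [lift_ext, rank_ext, rank_ext, List.map_map]
    congr 2
    exact List.map_congr_left fun x hx => ih x hx

theorem lift_id : ∀ v : VV β, lift id v = v := by
  intro v
  induction v using ind with
  | hb x => rw [lift]; rfl
  | he L ih =>
    rw [lift_ext]
    congr 1
    exact (List.map_congr_left ih).trans (List.map_id L)

theorem lift_lift (σ τ : β → β) : ∀ v : VV β, lift σ (lift τ v) = lift (σ ∘ τ) v := by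
  intro v
  induction v using ind with
  | hb x => rw [lift, lift, lift]; rfl
  | he L ih =>
    rw [lift_ext, lift_ext, lift_ext, List.map_map]
    congr 1
    exact List.map_congr_left ih

/-- Lift an equivalence of the base to the tree type. -/
def liftEquiv (σ : β ≃ β) : VV β ≃ VV β where
  toFun := lift σ
  invFun := lift σ.symm
  left_inv := fun v => by rw [lift_lift, Equiv.symm_comp_self, lift_id]
  right_inv := fun v => by rw [lift_lift, Equiv.self_comp_symm, lift_id]

end VV

theorem list_toFinset_map {α γ : Type*} [DecidableEq α] [DecidableEq γ] (f : α → γ)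
    (l : List α) : (l.map f).toFinset = l.toFinset.image f := by
  ext x
  simp

/-- The "extension" edges. -/
def extE (β : Type u) : Set (Finset (VV β)) :=
  { e | ∃ v ∈ e, ∃ L, v = VV.ext L ∧ ∃ w ∈ L, ∃ l, w = VV.ext l ∧
      e.erase v = l.toFinset ∧
      ∀ x ∈ l, VV.rank x < VV.rank v }

/-- The full edge set. -/
def bigE (k : ℕ) {β : Type u} (E₀ : Set (Finset β)) : Set (Finset (VV β)) :=
  { e | e.card = k ∧
    ((∃ e₀ ∈ E₀, e = e₀.image VV.base) ∨ e ∈ extE β) }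

theorem extension_property (k : ℕ) (hk : 2 ≤ k) {β : Type u} (E₀ : Set (Finset β))
    (F G : Finset (Finset (VV β))) (hF : ∀ s ∈ F, s.card = k - 1)
    (hG : ∀ s ∈ G, s.card = k - 1) (hFG : Disjoint F G) :
    ∃ v : VV β, (∀ s ∈ F, v ∉ s ∧ insert v s ∈ bigE k E₀) ∧
      (∀ s ∈ G, insert v s ∉ bigE k E₀) := by
  set allElems : List (VV β) := ((F ∪ G).toList.map Finset.toList).flatten with hAE
  set R : VV β := VV.ext allElems with hR
  set pad : VV β := VV.ext [R] with hpad
  set v : VV β := VV.ext ((F.toList.map (fun t => VV.ext t.toList)) ++ [pad]) with hv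
  have hmemAE : ∀ {x : VV β} {s : Finset (VV β)}, s ∈ F ∪ G → x ∈ s → x ∈ allElems := by
    intro x s hs hx
    rw [hAE]
    simp only [List.mem_flatten, List.mem_map]
    exact ⟨s.toList, ⟨s, by simpa using hs, rfl⟩, by simpa using hx⟩
  have hrankR : ∀ {x : VV β} {s : Finset (VV β)}, s ∈ F ∪ G → x ∈ s → VV.rank x < VV.rank R :=
    fun hs hx => VV.rank_lt_of_mem (hmemAE hs hx)
  have hRpad : VV.rank R < VV.rank pad := VV.rank_lt_of_mem (by simp)
  have hpadv : VV.rank pad < VV.rank v := VV.rank_lt_of_mem (by simp)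
  have hrankv : ∀ {x : VV β} {s : Finset (VV β)}, s ∈ F ∪ G → x ∈ s → VV.rank x < VV.rank v :=
    fun hs hx => lt_trans (hrankR hs hx) (lt_trans hRpad hpadv)
  have hvnotmem : ∀ {s : Finset (VV β)}, s ∈ F ∪ G → v ∉ s := by
    intro s hs hvs
    exact absurd (hrankv hs hvs) (lt_irrefl _)
  refine ⟨v, fun s hsF => ?_, fun s hsG => ?_⟩
  · have hvs : v ∉ s := hvnotmem (Finset.mem_union_left _ hsF)
    refine ⟨hvs, ?_, Or.inr ?_⟩
    · rw [Finset.card_insert_of_notMem hvs, hF s hsF]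
      omega
    · refine ⟨v, Finset.mem_insert_self _ _, _, rfl,
        VV.ext s.toList, ?_, s.toList, rfl, ?_, ?_⟩
      · simp only [List.mem_append, List.mem_map]
        exact Or.inl ⟨s, by simpa using hsF, rfl⟩
      · rw [Finset.erase_insert hvs]
        exact (Finset.toList_toFinset s).symm
      · intro x hx
        exact hrankv (Finset.mem_union_left _ hsF) (by simpa using hx)
  · rintro ⟨-, hcase⟩
    have hvs : v ∉ s := hvnotmem (Finset.mem_union_right _ hsG)
    rcases hcase with ⟨e₀, -, he⟩ | ⟨u, hu, L', huL, w', hw'L, l', hw'l, herase, hrk⟩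
    · have : v ∈ Finset.image VV.base e₀ := he ▸ Finset.mem_insert_self _ _
      simp only [Finset.mem_image] at this
      obtain ⟨y, -, hy⟩ := this
      rw [hv] at hy
      cases hy
    · rcases Finset.mem_insert.1 hu with rfl | hus
      · rw [Finset.erase_insert hvs] at herase
        have hL' : (F.toList.map (fun t => VV.ext t.toList)) ++ [pad] = L' := by
          rw [hv] at huL
          exact VV.ext.inj huL
        rw [← hL'] at hw'L
        rcases List.mem_append.1 hw'L with hw'F | hw'pad
        · obtain ⟨t, htF, hwt⟩ := List.mem_map.1 hw'F
          rw [← hwt] at hw'l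
          have : t.toList = l' := VV.ext.inj hw'l
          rw [← this, Finset.toList_toFinset] at herase
          subst herase
          exact absurd hsG (Finset.disjoint_left.1 hFG (by simpa using htF))
        · simp only [List.mem_singleton] at hw'pad
          rw [hw'pad, hpad] at hw'l
          have : [R] = l' := VV.ext.inj hw'l
          rw [← this] at herase
          have hRs : R ∈ s := by
            rw [herase]; simp
          exact absurd (hrankR (Finset.mem_union_right _ hsG) hRs) (lt_irrefl _)
      · have hru : VV.rank u < VV.rank v := hrankv (Finset.mem_union_right _ hsG) hus
        have hvu : v ≠ u := fun h => absurd (h ▸ hru) (lt_irrefl _)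
        have hvmem : v ∈ l'.toFinset := by
          rw [← herase]
          exact Finset.mem_erase.2 ⟨hvu, Finset.mem_insert_self _ _⟩
        have : VV.rank v < VV.rank u := hrk v (List.mem_toFinset.1 hvmem)
        omega

/-- Instance-free statement that `σ` maps `E₀` into `E₀`. -/
def PreservesE {β : Type u} (σ : β → β) (E₀ : Set (Finset β)) : Prop :=
  ∀ e₀ ∈ E₀, ∃ e₁ ∈ E₀, ∀ x, x ∈ e₁ ↔ ∃ y ∈ e₀, σ y = x

theorem bigE_image {k : ℕ} {β : Type u} {E₀ : Set (Finset β)} (σ : β ≃ β)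
    (hσ : PreservesE (⇑σ) E₀) {e : Finset (VV β)} (he : e ∈ bigE k E₀) :
    e.image (VV.lift ⇑σ) ∈ bigE k E₀ := by
  obtain ⟨hcard, hcase⟩ := he
  have hinj : Function.Injective (VV.lift (⇑σ) : VV β → VV β) := (VV.liftEquiv σ).injective
  refine ⟨by rw [Finset.card_image_of_injective _ hinj, hcard], ?_⟩
  rcases hcase with ⟨e₀, he₀, rfl⟩ | ⟨v, hv, L, rfl, w, hwL, l, rfl, herase, hrk⟩
  · obtain ⟨e₁, he₁, hmem⟩ := hσ e₀ he₀
    refine Or.inl ⟨e₁, he₁, ?_⟩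
    ext x
    simp only [Finset.mem_image]
    constructor
    · rintro ⟨y, ⟨z, hz, rfl⟩, rfl⟩
      exact ⟨σ z, (hmem _).2 ⟨z, hz, rfl⟩, (VV.lift_base (⇑σ) z).symm⟩
    · rintro ⟨z, hz1, rfl⟩
      obtain ⟨y, hy, rfl⟩ := (hmem z).1 hz1
      exact ⟨VV.base y, ⟨y, hy, rfl⟩, VV.lift_base (⇑σ) y⟩
  · refine Or.inr ⟨VV.lift ⇑σ (VV.ext L), Finset.mem_image_of_mem _ hv,
      L.map (VV.lift ⇑σ), VV.lift_ext _ _, VV.lift ⇑σ (VV.ext l),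
      List.mem_map_of_mem hwL,
      l.map (VV.lift ⇑σ), VV.lift_ext _ _, ?_, ?_⟩
    · rw [← Finset.image_erase hinj, herase, list_toFinset_map]
    · intro x hx
      obtain ⟨y, hy, rfl⟩ := List.mem_map.1 hx
      rw [VV.rank_lift, VV.rank_lift]
      exact hrk y hy

theorem bigE_image_iff {k : ℕ} {β : Type u} {E₀ : Set (Finset β)} (σ : β ≃ β)
    (h1 : PreservesE (⇑σ) E₀) (h2 : PreservesE (⇑σ.symm) E₀)
    {e : Finset (VV β)} :
    e.image (VV.lift ⇑σ) ∈ bigE k E₀ ↔ e ∈ bigE k E₀ := by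
  refine ⟨fun h => ?_, bigE_image σ h1⟩
  have h' := bigE_image σ.symm h2 h
  rwa [Finset.image_image, show (VV.lift ⇑σ.symm ∘ VV.lift ⇑σ) = id from ?_,
    Finset.image_id] at h'
  funext x
  exact (VV.liftEquiv σ).left_inv x

/-- The lifted equivalence is an automorphism of the hypergraph structure. -/
def liftLEquiv (k : ℕ) {β : Type u} (E₀ : Set (Finset β)) (σ : β ≃ β)
    (h1 : PreservesE (⇑σ) E₀) (h2 : PreservesE (⇑σ.symm) E₀) :
    letI : (hyperLang k).Structure (VV β) := hyperStructure k (bigE k E₀)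
    VV β ≃[hyperLang k] VV β :=
  letI : (hyperLang k).Structure (VV β) := hyperStructure k (bigE k E₀)
  { toEquiv := VV.liftEquiv σ
    map_fun' := fun {n} f _ => f.elim
    map_rel' := fun {n} r x => by
      show (Function.Injective (VV.lift ⇑σ ∘ x) ∧
          Finset.image (VV.lift ⇑σ ∘ x) Finset.univ ∈ bigE k E₀) ↔
        (Function.Injective x ∧ Finset.image x Finset.univ ∈ bigE k E₀)
      rw [show (Finset.image (VV.lift ⇑σ ∘ x) Finset.univ : Finset (VV β)) =
        (Finset.image x Finset.univ).image (VV.lift ⇑σ) from Finset.image_image.symm,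
        bigE_image_iff σ h1 h2]
      have hinj : Function.Injective (VV.lift (⇑σ) : VV β → VV β) :=
        (VV.liftEquiv σ).injective
      exact and_congr ⟨fun h => Function.Injective.of_comp h, fun h => hinj.comp h⟩ Iff.rfl }

theorem sameTypeOver_of_fixing (L : FirstOrder.Language) {M : Type u} [L.Structure M]
    (g : M ≃[L] M) (S : Set M) (hS : ∀ x ∈ S, g x = x) {n : Type*} (b b' : n → M)
    (hb : ∀ i, g (b i) = b' i) : SameTypeOver L S b b' := by
  intro m c hc φ
  have h : Sum.elim b' c = ⇑g ∘ Sum.elim b c := by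
    funext x
    cases x with
    | inl i => exact (hb i).symm
    | inr i => exact (hS _ (hc i)).symm
  rw [h]
  exact (Language.StrongHomClass.realize_formula g φ).symm

section Base
variable (k : ℕ) (I : Type u)

/-- The base vertex type. -/
abbrev BaseT : Type u := (Fin (k-1) × (I → ZMod 2)) ⊕ (I × ZMod 2)

/-- The base hyperedges. -/
def baseE : Set (Finset (BaseT k I)) :=
  { e | ∃ f : Fin (k-1) → I → ZMod 2, ∃ s : I,
      e = Finset.image (fun i => Sum.inl (i, f i)) Finset.univ ∪ {Sum.inr (s, ∑ i, f i s)} }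

variable {k I} (i₀ : Fin (k-1)) (s₀ : I)

/-- The flipping involution of the base. -/
def tau : BaseT k I → BaseT k I
  | .inl (j, f) => .inl (j, fun t => f t + if j = i₀ ∧ t = s₀ then 1 else 0)
  | .inr (t, ε) => .inr (t, ε + if t = s₀ then 1 else 0)

theorem zmod2_add_self (c : ZMod 2) : c + c = 0 := CharTwo.add_self_eq_zero c

theorem tau_involutive : Function.Involutive (tau i₀ s₀) := by
  rintro (⟨j, f⟩ | ⟨t, ε⟩)
  · simp only [tau, Sum.inl.injEq, Prod.mk.injEq, true_and]
    funext t
    rw [add_assoc, zmod2_add_self, add_zero]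
  · simp only [tau, Sum.inr.injEq, Prod.mk.injEq, true_and]
    rw [add_assoc, zmod2_add_self, add_zero]

/-- The flipping involution as a permutation. -/
def tauPerm : BaseT k I ≃ BaseT k I := (tau_involutive i₀ s₀).toPerm

theorem coe_tauPerm : ⇑(tauPerm i₀ s₀) = tau i₀ s₀ := rfl

theorem coe_tauPerm_symm : ⇑(tauPerm i₀ s₀).symm = tau i₀ s₀ := rfl

theorem tau_baseE : ∀ e₀ ∈ baseE k I, e₀.image (tau i₀ s₀) ∈ baseE k I := by
  rintro e₀ ⟨f, s, rfl⟩
  refine ⟨fun i => fun t => f i t + if i = i₀ ∧ t = s₀ then 1 else 0, s, ?_⟩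
  have hsum : ∑ i, (fun t => f i t + if i = i₀ ∧ t = s₀ then 1 else 0) s
      = (∑ i, f i s) + if s = s₀ then 1 else 0 := by
    simp only []
    rw [Finset.sum_add_distrib]
    congr 1
    by_cases hss : s = s₀
    · subst hss
      simp only [and_true]
      rw [Finset.sum_ite_eq' Finset.univ i₀ (fun _ => (1 : ZMod 2))]
      simp
    · simp [hss]
  rw [Finset.image_union, Finset.image_image, Finset.image_singleton, hsum]
  rfl

theorem tau_preserves : PreservesE (tau i₀ s₀) (baseE k I) := by
  intro e₀ he₀
  refine ⟨e₀.image (tau i₀ s₀), tau_baseE i₀ s₀ e₀ he₀, ?_⟩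
  intro x
  simp [Finset.mem_image]

end Base



section Main
variable (k : ℕ) (I : Type u)

/-- The distinguished `(k-1)`-tuple. -/
def aF : Fin (k-1) → VV (BaseT k I) :=
  fun i => VV.base (Sum.inl (i, fun _ => (0 : ZMod 2)))

theorem aF_injective : Function.Injective (aF k I) := by
  intro i j h
  simp only [aF, VV.base.injEq, Sum.inl.injEq, Prod.mk.injEq] at h
  exact h.1

theorem b_ne_aF (s₀ : I) (ε : ZMod 2) (j : Fin (k-1)) :
    VV.base (Sum.inr (s₀, ε)) ≠ aF k I j := by
  intro h
  simp only [aF, VV.base.injEq] at h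
  cases h

variable {k I}

theorem wF_injective (hk : 2 ≤ k) (c : VV (BaseT k I)) (hc : ∀ j, c ≠ aF k I j) :
    Function.Injective
      (fun i : Fin k => if h : (i : ℕ) < k - 1 then aF k I ⟨i, h⟩ else c) := by
  intro i j h
  simp only [] at h
  by_cases hi : (i : ℕ) < k - 1 <;> by_cases hj : (j : ℕ) < k - 1 <;>
    simp only [hi, hj, dif_pos, dif_neg, not_false_iff] at h
  · have h2 := aF_injective k I h
    exact Fin.ext (show (i : ℕ) = (j : ℕ) by simpa using h2)
  · exact absurd h.symm (hc _)
  · exact absurd h (hc _)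
  · have hi2 := i.2
    have hj2 := j.2
    have h3 : (i : ℕ) = (j : ℕ) := by omega
    exact Fin.ext h3

theorem wF_image (hk : 2 ≤ k) (c : VV (BaseT k I)) :
    Finset.image (fun i : Fin k => if h : (i : ℕ) < k - 1 then aF k I ⟨i, h⟩ else c)
        Finset.univ
      = Finset.image (aF k I) Finset.univ ∪ {c} := by
  ext x
  simp only [Finset.mem_image, Finset.mem_union, Finset.mem_singleton, Finset.mem_univ,
    true_and]
  constructor
  · rintro ⟨i, hi⟩
    by_cases h : (i : ℕ) < k - 1
    · rw [dif_pos h] at hi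
      exact Or.inl ⟨_, hi⟩
    · rw [dif_neg h] at hi
      exact Or.inr hi.symm
  · rintro (⟨j, hj⟩ | rfl)
    · have hjk : (j : ℕ) < k := lt_of_lt_of_le j.2 (Nat.sub_le k 1)
      refine ⟨⟨(j : ℕ), hjk⟩, ?_⟩
      rw [dif_pos (show ((⟨(j : ℕ), hjk⟩ : Fin k) : ℕ) < k - 1 from j.2), ← hj]
    · refine ⟨⟨k - 1, by omega⟩, ?_⟩
      rw [dif_neg (by simp)]

theorem edge0_mem (hk : 2 ≤ k) (s₀ : I) :
    (Finset.image (aF k I) Finset.univ ∪ {VV.base (Sum.inr (s₀, (0 : ZMod 2)))} :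
      Finset (VV (BaseT k I))) ∈ bigE k (baseE k I) := by
  have hdisj : Disjoint (Finset.image (aF k I) Finset.univ)
      ({VV.base (Sum.inr (s₀, (0 : ZMod 2)))} : Finset (VV (BaseT k I))) := by
    simp only [Finset.disjoint_singleton_right, Finset.mem_image]
    rintro ⟨j, -, hj⟩
    exact b_ne_aF k I s₀ 0 j hj.symm
  constructor
  · rw [Finset.card_union_of_disjoint hdisj,
      Finset.card_image_of_injective _ (aF_injective k I),
      Finset.card_univ, Fintype.card_fin, Finset.card_singleton]
    omega
  · refine Or.inl ⟨Finset.image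
        (fun i : Fin (k-1) => (Sum.inl (i, fun _ => (0 : ZMod 2)) : BaseT k I))
        Finset.univ ∪ {Sum.inr (s₀, (0 : ZMod 2))},
      ⟨fun _ => fun _ => 0, s₀, by simp⟩, ?_⟩
    rw [Finset.image_union, Finset.image_image, Finset.image_singleton]
    rfl

theorem edge1_not_mem (hk : 2 ≤ k) (s₀ : I) :
    (Finset.image (aF k I) Finset.univ ∪ {VV.base (Sum.inr (s₀, (1 : ZMod 2)))} :
      Finset (VV (BaseT k I))) ∉ bigE k (baseE k I) := by
  rintro ⟨-, hcase⟩
  rcases hcase with ⟨e₀, ⟨f, s, rfl⟩, heq⟩ | ⟨v, hv, L, rfl, -⟩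
  · have hmem1 : VV.base (Sum.inr (s, ∑ i, f i s))
        ∈ (Finset.image (aF k I) Finset.univ
            ∪ {VV.base (Sum.inr (s₀, (1 : ZMod 2)))} : Finset (VV (BaseT k I))) := by
      rw [heq]
      exact Finset.mem_image_of_mem _ (by simp)
    have hse : s = s₀ ∧ (∑ i, f i s) = 1 := by
      rcases Finset.mem_union.1 hmem1 with h | h
      · obtain ⟨j, -, hj⟩ := Finset.mem_image.1 h
        simp only [aF, VV.base.injEq] at hj
        exact absurd hj (by simp)
      · simp only [Finset.mem_singleton, VV.base.injEq, Sum.inr.injEq, Prod.mk.injEq] at h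
        exact ⟨h.1, h.2⟩
    have hf0 : ∀ j : Fin (k-1), f j = fun _ => 0 := by
      intro j
      have hmem2 : VV.base (Sum.inl (j, f j))
          ∈ (Finset.image (aF k I) Finset.univ
              ∪ {VV.base (Sum.inr (s₀, (1 : ZMod 2)))} : Finset (VV (BaseT k I))) := by
        rw [heq]
        refine Finset.mem_image_of_mem _ ?_
        exact Finset.mem_union_left _ (Finset.mem_image_of_mem _ (Finset.mem_univ j))
      rcases Finset.mem_union.1 hmem2 with h | h
      · obtain ⟨j', -, hj'⟩ := Finset.mem_image.1 h
        simp only [aF, VV.base.injEq, Sum.inl.injEq, Prod.mk.injEq] at hj'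
        exact hj'.2.symm
      · simp only [Finset.mem_singleton, VV.base.injEq] at h
        exact absurd h (by simp)
    have hzero : (∑ i, f i s) = 0 :=
      Finset.sum_eq_zero fun i _ => congrFun (hf0 i) s
    exact one_ne_zero (hse.2.symm.trans hzero)
  · rcases Finset.mem_union.1 hv with h | h
    · obtain ⟨j, -, hj⟩ := Finset.mem_image.1 h
      simp only [aF] at hj
      cases hj
    · simp only [Finset.mem_singleton] at h
      cases h

end Main

end Aux

/-- The theory of the random `k`-ary hypergraph has unbounded `(k-1)`-splitting:
for every cardinal `λ` there is a `k`-uniform hypergraph with the random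
extension property, a parameter set `B`, and a `(k-1)`-partitioned type
`tp(a_0; …; a_{k-2} / B)` that `(k-1)`-splits over every subset `C ⊆ B` of
cardinality less than `λ`. -/
theorem randomHypergraph_unbounded_splitting (k : ℕ) (hk : 2 ≤ k)
    (lam : Cardinal.{u}) :
    ∃ (M : Type u) (_ : DecidableEq M) (E : Set (Finset M)),
      (∀ e ∈ E, e.card = k) ∧
      (∀ F G : Finset (Finset M), (∀ s ∈ F, s.card = k - 1) →
        (∀ s ∈ G, s.card = k - 1) → Disjoint F G →
        ∃ v : M, (∀ s ∈ F, v ∉ s ∧ insert v s ∈ E) ∧ (∀ s ∈ G, insert v s ∉ E)) ∧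
      ∃ (B : Set M) (a : Fin (k - 1) → M), Function.Injective a ∧
        ∀ C : Set M, C ⊆ B → #C < lam →
          @KSplits (hyperLang k) M (hyperStructure k E) (k - 1) a B C := by
  refine ⟨VV (BaseT k lam.out), inferInstance, bigE k (baseE k lam.out),
    fun e he => he.1,
    fun F G hF hG hFG => extension_property k hk _ F G hF hG hFG,
    Set.range (fun p : lam.out × ZMod 2 => VV.base (Sum.inr p)),
    aF k lam.out, aF_injective k lam.out, ?_⟩
  intro C hCB hClt
  -- find an index s₀ not touched by C
  have hs₀ : ∃ s₀ : lam.out, ∀ ε : ZMod 2, VV.base (Sum.inr (s₀, ε)) ∉ C := by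
    by_contra hcon
    push_neg at hcon
    choose ε hε using hcon
    have hinj' : Function.Injective
        (fun s : lam.out => (⟨VV.base (Sum.inr (s, ε s)), hε s⟩ : C)) := by
      intro s s' h
      simp only [Subtype.mk.injEq, VV.base.injEq, Sum.inr.injEq, Prod.mk.injEq] at h
      exact h.1
    have hle : #lam.out ≤ #C := Cardinal.mk_le_of_injective hinj'
    rw [Cardinal.mk_out] at hle
    exact absurd (lt_of_le_of_lt hle hClt) (lt_irrefl _)
  obtain ⟨s₀, hs₀⟩ := hs₀
  letI : (hyperLang k).Structure (VV (BaseT k lam.out)) :=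
    hyperStructure k (bigE k (baseE k lam.out))
  set φ : (hyperLang k).Formula (Fin (k-1) ⊕ Fin 1) :=
    FirstOrder.Language.Relations.formula (PLift.up rfl)
      (fun i : Fin k => FirstOrder.Language.Term.var
        (if h : (i : ℕ) < k - 1 then Sum.inl ⟨i, h⟩ else Sum.inr 0)) with hφ
  have helim : ∀ c : Fin 1 → VV (BaseT k lam.out),
      (fun i : Fin k => Sum.elim (aF k lam.out) c
          (if h : (i : ℕ) < k - 1 then Sum.inl ⟨i, h⟩ else Sum.inr 0))
        = fun i : Fin k => if h : (i : ℕ) < k - 1 then aF k lam.out ⟨i, h⟩ else c 0 := by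
    intro c
    funext i
    by_cases h : (i : ℕ) < k - 1
    · rw [dif_pos h, dif_pos h]
      rfl
    · rw [dif_neg h, dif_neg h]
      exact congrArg c (Subsingleton.elim _ _)
  have hreal : ∀ c : Fin 1 → VV (BaseT k lam.out), (∀ j, c 0 ≠ aF k lam.out j) →
      (φ.Realize (Sum.elim (aF k lam.out) c) ↔
        (Finset.image (aF k lam.out) Finset.univ ∪ {c 0} :
          Finset (VV (BaseT k lam.out))) ∈ bigE k (baseE k lam.out)) := by
    intro c hc
    rw [hφ]; erw [FirstOrder.Language.Formula.realize_rel]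
    simp only [FirstOrder.Language.Term.realize_var]
    show (Function.Injective _ ∧ _ ∈ bigE k (baseE k lam.out)) ↔ _
    rw [helim c, wF_image hk (c 0)]
    exact ⟨fun h => h.2, fun h => ⟨wF_injective hk (c 0) hc, h⟩⟩
  refine ⟨1, φ, fun _ => VV.base (Sum.inr (s₀, 0)), fun _ => VV.base (Sum.inr (s₀, 1)),
    fun _ => ⟨(s₀, 0), rfl⟩, fun _ => ⟨(s₀, 1), rfl⟩, ?_, ?_, ?_⟩
  · -- same type over C ∪ a '' {j ≠ i}
    intro i
    have h1 : PreservesE (⇑(tauPerm i s₀)) (baseE k lam.out) := tau_preserves i s₀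
    have h2 : PreservesE (⇑(tauPerm i s₀).symm) (baseE k lam.out) := tau_preserves i s₀
    refine sameTypeOver_of_fixing (hyperLang k)
      (liftLEquiv k (baseE k lam.out) (tauPerm i s₀) h1 h2) _ ?_ _ _ ?_
    · rintro x (hxC | ⟨j, hj, rfl⟩)
      · obtain ⟨⟨t, ε⟩, rfl⟩ := hCB hxC
        have hts : t ≠ s₀ := by
          rintro rfl
          exact hs₀ ε hxC
        show VV.lift (tau i s₀) (VV.base (Sum.inr (t, ε))) = _
        rw [VV.lift_base]
        simp only [tau, if_neg hts, add_zero]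
      · show VV.lift (tau i s₀) (aF k lam.out j) = aF k lam.out j
        rw [aF, VV.lift_base]
        show VV.base (Sum.inl (j, fun t => (0 : ZMod 2) + if j = i ∧ t = s₀ then 1 else 0)) = _
        simp only [VV.base.injEq, Sum.inl.injEq, Prod.mk.injEq, true_and]
        funext t
        have hj' : j ≠ i := hj
        simp [hj']
    · intro i'
      show VV.lift (tau i s₀) (VV.base (Sum.inr (s₀, 0))) = _
      rw [VV.lift_base]
      show VV.base (Sum.inr (s₀, (0 : ZMod 2) + if s₀ = s₀ then 1 else 0)) = _
      simp
  · rw [hreal _ (fun j => b_ne_aF k lam.out s₀ 0 j)]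
    exact edge0_mem hk s₀
  · rw [hreal _ (fun j => b_ne_aF k lam.out s₀ 1 j)]
    exact edge1_not_mem hk s₀
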